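/- Let x₁ ≤ ⋯ ≤ xₙ be agent locations partitioned into groups G₁, …, Gₘ with positive weights wⱼ ∈ [w_min, w_max]. Let Y = (x₁, xₙ) and let Y* = (y₁*, y₂*) be any pair with x₁ ≤ y₁* ≤ y₂* ≤ xₙ. Then under the weighted total group cost objective, max_j wⱼ·Σ_{i∈Gⱼ} c(Y, xᵢ) − max_j wⱼ·Σ_{i∈Gⱼ} c(Y*, xᵢ) ≤ w_max·(n−2)·max{y₁* − x₁, xₙ − y₂*}, and max_j wⱼ·Σ_{i∈Gⱼ} c(Y*, xᵢ) ≥ w_min·max{y₁* − x₁, xₙ − y₂*}; consequently max_j wⱼ·Σ_{i∈Gⱼ} c(Y, xᵢ) ≤ (1 + (n−2)·w_max/w_min)·max_j wⱼ·Σ_{i∈Gⱼ} c(Y*, xᵢ). -/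

import Mathlib

theorem aux11 (n m : ℕ) (hn : 2 ≤ n) (x : Fin n → ℝ) (i0 iN : Fin n)
    (hi0 : ∀ i, x i0 ≤ x i) (hiN : ∀ i, x i ≤ x iN) (hne : i0 ≠ iN)
    (G : Fin m → Finset (Fin n))
    (hcover : ∀ i : Fin n, ∃ j, i ∈ G j)
    (w : Fin m → ℝ) (wmin wmax : ℝ) (hminpos : 0 < wmin)
    (hwb : ∀ j, wmin ≤ w j ∧ w j ≤ wmax)
    (hM : (Finset.univ : Finset (Fin m)).Nonempty)
    (c : ℝ → ℝ → ℝ → ℝ) (hc : ∀ z₁ z₂ z, c z₁ z₂ z = min |z₁ - z| |z₂ - z|)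
    (y₁ y₂ : ℝ) (hy1 : x i0 ≤ y₁) (hy2 : y₁ ≤ y₂) (hy3 : y₂ ≤ x iN) :
    (Finset.univ.sup' hM
        (fun j => w j * ∑ i ∈ G j, c (x i0) (x iN) (x i))
      - Finset.univ.sup' hM (fun j => w j * ∑ i ∈ G j, c y₁ y₂ (x i))
      ≤ wmax * ((n : ℝ) - 2) * max (y₁ - x i0) (x iN - y₂)) ∧
    (wmin * max (y₁ - x i0) (x iN - y₂)
      ≤ Finset.univ.sup' hM (fun j => w j * ∑ i ∈ G j, c y₁ y₂ (x i))) ∧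
    (Finset.univ.sup' hM
        (fun j => w j * ∑ i ∈ G j, c (x i0) (x iN) (x i))
      ≤ (1 + ((n : ℝ) - 2) * wmax / wmin)
          * Finset.univ.sup' hM (fun j => w j * ∑ i ∈ G j, c y₁ y₂ (x i))) := by
  set a := x i0 with ha
  set b := x iN with hb
  set D := max (y₁ - a) (b - y₂) with hDdef
  have hD0 : (0:ℝ) ≤ D := le_trans (by linarith) (le_max_left _ _)
  have hwmin0 : (0:ℝ) ≤ wmin := le_of_lt hminpos
  have hwj0 : ∀ j, (0:ℝ) ≤ w j := fun j => le_trans hwmin0 (hwb j).1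
  have hwmax0 : (0:ℝ) ≤ wmax := by
    obtain ⟨j, _⟩ := hM
    exact le_trans (hwj0 j) (hwb j).2
  have hn2 : (2:ℝ) ≤ (n:ℝ) := by exact_mod_cast hn
  have hfnn : ∀ t : ℝ, 0 ≤ c y₁ y₂ t := by
    intro t; rw [hc]; exact le_min (abs_nonneg _) (abs_nonneg _)
  -- pointwise key bound
  have hkey : ∀ i : Fin n, c a b (x i) ≤ c y₁ y₂ (x i) + D := by
    intro i
    have h1 : a ≤ x i := hi0 i
    have h2 : x i ≤ b := hiN i
    rw [hc, hc]
    have e1 : |a - x i| = x i - a := by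
      rw [abs_sub_comm]; exact abs_of_nonneg (by linarith)
    have e2 : |b - x i| = b - x i := abs_of_nonneg (by linarith)
    rw [e1, e2]
    have k1 : x i - a ≤ |y₁ - x i| + D := by
      rcases abs_cases (y₁ - x i) with ⟨h, h'⟩ | ⟨h, h'⟩ <;>
        · have := le_max_left (y₁ - a) (b - y₂); rw [← hDdef] at this; linarith
    have k2 : b - x i ≤ |y₂ - x i| + D := by
      rcases abs_cases (y₂ - x i) with ⟨h, h'⟩ | ⟨h, h'⟩ <;>
        · have := le_max_right (y₁ - a) (b - y₂); rw [← hDdef] at this; linarith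
    rcases le_total |y₁ - x i| |y₂ - x i| with h | h
    · rw [min_eq_left h]; exact le_trans (min_le_left _ _) k1
    · rw [min_eq_right h]; exact le_trans (min_le_right _ _) k2
  have hF0 : c a b (x i0) = 0 := by
    rw [hc, ← ha, sub_self, abs_zero]; exact min_eq_left (abs_nonneg _)
  have hFN : c a b (x iN) = 0 := by
    rw [hc, ← hb, sub_self, abs_zero]; exact min_eq_right (abs_nonneg _)
  have hf0 : c y₁ y₂ (x i0) = y₁ - a := by
    rw [hc, ← ha, abs_of_nonneg (by linarith : (0:ℝ) ≤ y₁ - a),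
      abs_of_nonneg (by linarith : (0:ℝ) ≤ y₂ - a)]
    exact min_eq_left (by linarith)
  have hfN : c y₁ y₂ (x iN) = b - y₂ := by
    rw [hc, ← hb, abs_sub_comm y₁ b, abs_sub_comm y₂ b,
      abs_of_nonneg (by linarith : (0:ℝ) ≤ b - y₁),
      abs_of_nonneg (by linarith : (0:ℝ) ≤ b - y₂)]
    exact min_eq_right (by linarith)
  -- sum bound per group
  have hsum : ∀ j : Fin m,
      ∑ i ∈ G j, c a b (x i) ≤ ∑ i ∈ G j, c y₁ y₂ (x i) + ((n:ℝ) - 2) * D := by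
    intro j
    set s : Finset (Fin n) := {i0, iN} with hs
    have hscard : s.card = 2 := Finset.card_pair hne
    have hsplit := Finset.sum_inter_add_sum_sdiff (G j) s
      (fun i => c a b (x i) - c y₁ y₂ (x i))
    have h1 : ∑ i ∈ G j ∩ s, (c a b (x i) - c y₁ y₂ (x i)) ≤ 0 := by
      apply Finset.sum_nonpos
      intro i hi
      have hi' : i ∈ s := (Finset.mem_inter.mp hi).2
      rcases Finset.mem_insert.mp hi' with h | h
      · rw [h, hF0]; linarith [hfnn (x i0)]
      · rw [Finset.mem_singleton] at h
        rw [h, hFN]; linarith [hfnn (x iN)]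
    have h2 : ∑ i ∈ G j \ s, (c a b (x i) - c y₁ y₂ (x i)) ≤ ((n:ℝ) - 2) * D := by
      calc ∑ i ∈ G j \ s, (c a b (x i) - c y₁ y₂ (x i))
          ≤ ∑ _i ∈ G j \ s, D := by
            apply Finset.sum_le_sum
            intro i _
            have := hkey i; linarith
        _ = ((G j \ s).card : ℝ) * D := by rw [Finset.sum_const, nsmul_eq_mul]
        _ ≤ ((n:ℝ) - 2) * D := by
            apply mul_le_mul_of_nonneg_right _ hD0
            have hsub : G j \ s ⊆ Finset.univ \ s :=
              Finset.sdiff_subset_sdiff (Finset.subset_univ _) (subset_refl _)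
            have hcard : (Finset.univ \ s).card = n - 2 := by
              rw [Finset.card_sdiff_of_subset (Finset.subset_univ _), hscard, Finset.card_univ,
                Fintype.card_fin]
            have := Finset.card_le_card hsub
            rw [hcard] at this
            have : ((G j \ s).card : ℝ) ≤ ((n - 2 : ℕ) : ℝ) := by exact_mod_cast this
            rwa [Nat.cast_sub hn, Nat.cast_ofNat] at this
    have := Finset.sum_sub_distrib (s := G j) (f := fun i => c a b (x i))
      (g := fun i => c y₁ y₂ (x i))
    linarith [hsplit, h1, h2, this]
  set S := Finset.univ.sup' hM (fun j => w j * ∑ i ∈ G j, c y₁ y₂ (x i)) with hS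
  have hS0 : 0 ≤ S := by
    obtain ⟨j, hj⟩ := hM
    have : w j * ∑ i ∈ G j, c y₁ y₂ (x i) ≤ S := by
      rw [hS]
      exact Finset.le_sup' (f := fun j => w j * ∑ i ∈ G j, c y₁ y₂ (x i)) (Finset.mem_univ j)
    have hnn : 0 ≤ ∑ i ∈ G j, c y₁ y₂ (x i) :=
      Finset.sum_nonneg fun i _ => hfnn (x i)
    nlinarith [hwj0 j]
  -- part 1
  have part1 : Finset.univ.sup' hM (fun j => w j * ∑ i ∈ G j, c a b (x i)) - S
      ≤ wmax * ((n:ℝ) - 2) * D := by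
    rw [sub_le_iff_le_add]
    apply Finset.sup'_le
    intro j _
    have hle : w j * ∑ i ∈ G j, c y₁ y₂ (x i) ≤ S := by
      rw [hS]
      exact Finset.le_sup' (f := fun j => w j * ∑ i ∈ G j, c y₁ y₂ (x i)) (Finset.mem_univ j)
    have h2 : w j * (((n:ℝ) - 2) * D) ≤ wmax * (((n:ℝ) - 2) * D) :=
      mul_le_mul_of_nonneg_right (hwb j).2 (by nlinarith)
    have h3 := mul_le_mul_of_nonneg_left (hsum j) (hwj0 j)
    nlinarith
  -- part 2
  have part2 : wmin * D ≤ S := by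
    rcases le_total (y₁ - a) (b - y₂) with h | h
    · rw [hDdef, max_eq_right h]
      obtain ⟨j, hj⟩ := hcover iN
      have hsingle : b - y₂ ≤ ∑ i ∈ G j, c y₁ y₂ (x i) :=
        le_trans (le_of_eq hfN.symm)
          (Finset.single_le_sum (f := fun i => c y₁ y₂ (x i)) (fun i _ => hfnn (x i)) hj)
      have : w j * (b - y₂) ≤ w j * ∑ i ∈ G j, c y₁ y₂ (x i) :=
        mul_le_mul_of_nonneg_left hsingle (hwj0 j)
      have hle : w j * ∑ i ∈ G j, c y₁ y₂ (x i) ≤ S := by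
        rw [hS]
        exact Finset.le_sup' (f := fun j => w j * ∑ i ∈ G j, c y₁ y₂ (x i)) (Finset.mem_univ j)
      nlinarith [(hwb j).1]
    · rw [hDdef, max_eq_left h]
      obtain ⟨j, hj⟩ := hcover i0
      have hsingle : y₁ - a ≤ ∑ i ∈ G j, c y₁ y₂ (x i) :=
        le_trans (le_of_eq hf0.symm)
          (Finset.single_le_sum (f := fun i => c y₁ y₂ (x i)) (fun i _ => hfnn (x i)) hj)
      have : w j * (y₁ - a) ≤ w j * ∑ i ∈ G j, c y₁ y₂ (x i) :=
        mul_le_mul_of_nonneg_left hsingle (hwj0 j)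
      have hle : w j * ∑ i ∈ G j, c y₁ y₂ (x i) ≤ S := by
        rw [hS]
        exact Finset.le_sup' (f := fun j => w j * ∑ i ∈ G j, c y₁ y₂ (x i)) (Finset.mem_univ j)
      nlinarith [(hwb j).1]
  refine ⟨part1, part2, ?_⟩
  -- part 3
  have hDS : D ≤ S / wmin := (le_div_iff₀ hminpos).mpr (by linarith)
  have h4 : wmax * ((n:ℝ) - 2) * D ≤ ((n:ℝ) - 2) * wmax / wmin * S := by
    rw [div_mul_eq_mul_div, le_div_iff₀ hminpos]
    have hnn : 0 ≤ wmax * ((n:ℝ) - 2) := by nlinarith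
    have := mul_le_mul_of_nonneg_left part2 hnn
    nlinarith
  have hring : (1 + ((n:ℝ) - 2) * wmax / wmin) * S
      = S + ((n:ℝ) - 2) * wmax / wmin * S := by ring
  linarith [part1, h4, hring]

theorem stmt11 (n m : ℕ) (hn : 2 ≤ n) (x : Fin n → ℝ) (hx : Monotone x)
    (G : Fin m → Finset (Fin n))
    (hcover : ∀ i : Fin n, ∃ j, i ∈ G j)
    (hdisj : ∀ j j' : Fin m, j ≠ j' → Disjoint (G j) (G j'))
    (w : Fin m → ℝ) (wmin wmax : ℝ) (hminpos : 0 < wmin)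
    (hwb : ∀ j, wmin ≤ w j ∧ w j ≤ wmax)
    (hM : (Finset.univ : Finset (Fin m)).Nonempty)
    (c : ℝ → ℝ → ℝ → ℝ) (hc : ∀ z₁ z₂ z, c z₁ z₂ z = min |z₁ - z| |z₂ - z|)
    (y₁ y₂ : ℝ)
    (hy : x ⟨0, by omega⟩ ≤ y₁ ∧ y₁ ≤ y₂ ∧ y₂ ≤ x ⟨n - 1, by omega⟩) :
    (Finset.univ.sup' hM
        (fun j => w j * ∑ i ∈ G j, c (x ⟨0, by omega⟩) (x ⟨n - 1, by omega⟩) (x i))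
      - Finset.univ.sup' hM (fun j => w j * ∑ i ∈ G j, c y₁ y₂ (x i))
      ≤ wmax * ((n : ℝ) - 2) * max (y₁ - x ⟨0, by omega⟩) (x ⟨n - 1, by omega⟩ - y₂)) ∧
    (wmin * max (y₁ - x ⟨0, by omega⟩) (x ⟨n - 1, by omega⟩ - y₂)
      ≤ Finset.univ.sup' hM (fun j => w j * ∑ i ∈ G j, c y₁ y₂ (x i))) ∧
    (Finset.univ.sup' hM
        (fun j => w j * ∑ i ∈ G j, c (x ⟨0, by omega⟩) (x ⟨n - 1, by omega⟩) (x i))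
      ≤ (1 + ((n : ℝ) - 2) * wmax / wmin)
          * Finset.univ.sup' hM (fun j => w j * ∑ i ∈ G j, c y₁ y₂ (x i))) := by
  exact aux11 n m hn x ⟨0, by omega⟩ ⟨n - 1, by omega⟩
    (fun i => hx (by rw [Fin.le_def]; exact Nat.zero_le _))
    (fun i => hx (by rw [Fin.le_def]; exact Nat.le_sub_one_of_lt i.isLt))
    (by simp only [ne_eq, Fin.mk.injEq]; omega)
    G hcover w wmin wmax hminpos hwb hM c hc y₁ y₂ hy.1 hy.2.1 hy.2.2
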